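/- Let η ∈ (0,1), λ ∈ (0,1), c > 0 and N ≥ 1 an integer with η ≤ λ and c·η^N ≤ λ^N. Let (a_t)_{t≥0} and (b_t)_{t≥0} be nonnegative real sequences such that a_t ≤ c·η^t·a_0 + Σ_{i=0}^{t−1} η^{t−1−i} b_i for all 1 ≤ t ≤ N, and a_t ≤ c·η^N·a_{t−N} + Σ_{i=t−N}^{t−1} η^{t−1−i} b_i for all t > N. Then a_t ≤ c·a_0·λ^t + Σ_{i=0}^{t−1} λ^{t−1−i} b_i for all t ≥ 1. -/

import Mathlib

/-- **Recursion-chaining lemma.** A sequence satisfying a within-window bound on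
`1 ≤ t ≤ N` and an `N`-step contraction for `t > N` satisfies a uniform geometric
bound with any rate `λ` such that `η ≤ λ` and `c·η^N ≤ λ^N`. -/
theorem stmt7 (η lam c : ℝ) (hη : η ∈ Set.Ioo (0 : ℝ) 1) (hlam : lam ∈ Set.Ioo (0 : ℝ) 1)
    (hc : 0 < c) (N : ℕ) (hN : 1 ≤ N) (hηlam : η ≤ lam) (hcN : c * η ^ N ≤ lam ^ N)
    (a b : ℕ → ℝ) (ha : ∀ t, 0 ≤ a t) (hb : ∀ t, 0 ≤ b t)
    (h1 : ∀ t, 1 ≤ t → t ≤ N →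
      a t ≤ c * η ^ t * a 0 + ∑ i ∈ Finset.range t, η ^ (t - 1 - i) * b i)
    (h2 : ∀ t, N < t →
      a t ≤ c * η ^ N * a (t - N) + ∑ i ∈ Finset.Ico (t - N) t, η ^ (t - 1 - i) * b i) :
    ∀ t, 1 ≤ t → a t ≤ c * a 0 * lam ^ t + ∑ i ∈ Finset.range t, lam ^ (t - 1 - i) * b i := by
  intro t
  induction t using Nat.strong_induction_on with
  | _ t IH =>
  intro ht
  rcases le_or_gt t N with hle | hlt
  · calc a t ≤ c * η ^ t * a 0 + ∑ i ∈ Finset.range t, η ^ (t - 1 - i) * b i :=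
        h1 t ht hle
      _ ≤ c * lam ^ t * a 0 + ∑ i ∈ Finset.range t, lam ^ (t - 1 - i) * b i := by
        gcongr with i hi
        · exact ha 0
        · exact hη.1.le
        · exact hb i
        · exact hη.1.le
      _ = c * a 0 * lam ^ t + ∑ i ∈ Finset.range t, lam ^ (t - 1 - i) * b i := by ring
  · have hIH := IH (t - N) (by omega) (by omega)
    have hS1 : (0:ℝ) ≤ ∑ i ∈ Finset.range (t - N), lam ^ (t - N - 1 - i) * b i :=
      Finset.sum_nonneg fun i _ => mul_nonneg (pow_nonneg hlam.1.le _) (hb i)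
    have hsplit : ∑ i ∈ Finset.range t, lam ^ (t - 1 - i) * b i
        = ∑ i ∈ Finset.range (t - N), lam ^ (t - 1 - i) * b i
          + ∑ i ∈ Finset.Ico (t - N) t, lam ^ (t - 1 - i) * b i := by
      rw [Finset.range_eq_Ico, Finset.range_eq_Ico]
      exact (Finset.sum_Ico_consecutive (fun i => lam ^ (t - 1 - i) * b i) (n := t - N) (Nat.zero_le _) (by omega)).symm
    calc a t ≤ c * η ^ N * a (t - N) + ∑ i ∈ Finset.Ico (t - N) t, η ^ (t - 1 - i) * b i :=
        h2 t hlt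
      _ ≤ c * η ^ N * (c * a 0 * lam ^ (t - N)
            + ∑ i ∈ Finset.range (t - N), lam ^ (t - N - 1 - i) * b i)
          + ∑ i ∈ Finset.Ico (t - N) t, lam ^ (t - 1 - i) * b i := by
        gcongr with i hi <;>
          first
          | exact hIH
          | exact hb i
          | exact hη.1.le
          | exact mul_nonneg hc.le (pow_nonneg hη.1.le _)
          | exact ha _
          | positivity
      _ = (c * η ^ N) * (c * a 0 * lam ^ (t - N))
          + ∑ i ∈ Finset.range (t - N), (c * η ^ N) * (lam ^ (t - N - 1 - i) * b i)
          + ∑ i ∈ Finset.Ico (t - N) t, lam ^ (t - 1 - i) * b i := by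
        rw [mul_add, Finset.mul_sum]
      _ ≤ lam ^ N * (c * a 0 * lam ^ (t - N))
          + ∑ i ∈ Finset.range (t - N), lam ^ N * (lam ^ (t - N - 1 - i) * b i)
          + ∑ i ∈ Finset.Ico (t - N) t, lam ^ (t - 1 - i) * b i := by
        gcongr with i hi <;>
          first
          | exact mul_nonneg (mul_nonneg hc.le (ha 0)) (pow_nonneg hlam.1.le _)
          | exact mul_nonneg (pow_nonneg hlam.1.le _) (hb i)
          | exact hcN
          | exact ha _
          | exact mul_nonneg hc.le (pow_nonneg hη.1.le _)
          | positivity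
      _ = c * a 0 * lam ^ t + ∑ i ∈ Finset.range t, lam ^ (t - 1 - i) * b i := by
        rw [hsplit]
        have e1 : lam ^ N * (c * a 0 * lam ^ (t - N)) = c * a 0 * lam ^ t := by
          rw [mul_comm (lam ^ N), mul_assoc, ← pow_add]
          congr 2
          omega
        have e2 : ∑ i ∈ Finset.range (t - N), lam ^ N * (lam ^ (t - N - 1 - i) * b i)
            = ∑ i ∈ Finset.range (t - N), lam ^ (t - 1 - i) * b i := by
          refine Finset.sum_congr rfl fun i hi => ?_
          simp only [Finset.mem_range] at hi
          rw [← mul_assoc, ← pow_add]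
          congr 2
          omega
        rw [e1, e2, add_assoc]
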